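/- Let k be a field, A₁ and A₂ associative k-algebras, H₁ a group acting on A₁ by k-algebra automorphisms and H₂ a group acting on A₂ by k-algebra automorphisms. Suppose that A₁ has no nonzero proper H₁-invariant two-sided ideals, A₂ has no nonzero proper H₂-invariant two-sided ideals, and the H₁-fixed subring of the center of A₁ equals k. Then the tensor product A₁ ⊗_k A₂, with the natural H₁ × H₂ action, has no nonzero proper (H₁ × H₂)-invariant two-sided ideals. -/

import Mathlib

open TensorProduct

/-- If `A₁` is `H₁`-simple, `A₂` is `H₂`-simple, and the `H₁`-fixed subring of
the center of `A₁` equals `k`, then `A₁ ⊗[k] A₂` is `(H₁ × H₂)`-simple. -/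
theorem tensor_product_G_simple
    {k : Type*} [Field k] {A₁ A₂ : Type*} [Ring A₁] [Ring A₂] [Algebra k A₁] [Algebra k A₂]
    {H₁ H₂ : Type*} [Group H₁] [Group H₂]
    (φ₁ : H₁ →* (A₁ ≃ₐ[k] A₁)) (φ₂ : H₂ →* (A₂ ≃ₐ[k] A₂))
    (hA₁simple : ∀ I : TwoSidedIdeal A₁, (∀ h : H₁, ∀ x ∈ I, φ₁ h x ∈ I) → I = ⊥ ∨ I = ⊤)
    (hA₂simple : ∀ I : TwoSidedIdeal A₂, (∀ h : H₂, ∀ x ∈ I, φ₂ h x ∈ I) → I = ⊥ ∨ I = ⊤)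
    (hcenter : ∀ z ∈ Subalgebra.center k A₁, (∀ h : H₁, φ₁ h z = z) →
      ∃ c : k, z = algebraMap k A₁ c) :
    ∀ I : TwoSidedIdeal (A₁ ⊗[k] A₂),
      (∀ h : H₁ × H₂, ∀ x ∈ I, (Algebra.TensorProduct.congr (φ₁ h.1) (φ₂ h.2)) x ∈ I) →
      I = ⊥ ∨ I = ⊤ := by
  classical
  intro I hI
  by_cases hbot : I = ⊥
  · exact Or.inl hbot
  right
  -- there is a nonzero element of I
  have hex : ∃ x, x ∈ I ∧ x ≠ 0 := by
    by_contra h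
    push_neg at h
    apply hbot
    refine SetLike.ext fun z => ?_
    rw [TwoSidedIdeal.mem_bot]
    exact ⟨fun hz => h z hz, fun hz => hz ▸ I.zero_mem⟩
  -- set up the basis and the linear equivalence
  set ι := Module.Basis.ofVectorSpaceIndex k A₂ with hι
  set b : Module.Basis ι k A₂ := Module.Basis.ofVectorSpace k A₂ with hb
  set e : A₁ ⊗[k] A₂ ≃ₗ[k] (ι →₀ A₁) :=
    (TensorProduct.congr (LinearEquiv.refl k A₁) b.repr).trans
      (TensorProduct.finsuppScalarRight k k A₁ ι) with he
  have e_tmul : ∀ (a : A₁) (m : A₂) (i : ι), e (a ⊗ₜ[k] m) i = b.repr m i • a := by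
    intro a m i
    simp [he, TensorProduct.finsuppScalarRight_apply_tmul_apply]
  have hL : ∀ (a : A₁) (x : A₁ ⊗[k] A₂) (i : ι),
      e ((a ⊗ₜ[k] (1 : A₂)) * x) i = a * e x i := by
    intro a x i
    induction x using TensorProduct.induction_on with
    | zero => simp
    | tmul a' m =>
      rw [Algebra.TensorProduct.tmul_mul_tmul, one_mul, e_tmul, e_tmul, mul_smul_comm]
    | add u v hu hv => rw [mul_add, map_add, map_add, Finsupp.add_apply, Finsupp.add_apply,
        hu, hv, mul_add]
  have hR : ∀ (a : A₁) (x : A₁ ⊗[k] A₂) (i : ι),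
      e (x * (a ⊗ₜ[k] (1 : A₂))) i = e x i * a := by
    intro a x i
    induction x using TensorProduct.induction_on with
    | zero => simp
    | tmul a' m =>
      rw [Algebra.TensorProduct.tmul_mul_tmul, mul_one, e_tmul, e_tmul, smul_mul_assoc]
    | add u v hu hv => rw [add_mul, map_add, map_add, Finsupp.add_apply, Finsupp.add_apply,
        hu, hv, add_mul]
  have hH : ∀ (h : H₁) (x : A₁ ⊗[k] A₂) (i : ι),
      e ((Algebra.TensorProduct.congr (φ₁ h) (φ₂ 1)) x) i = φ₁ h (e x i) := by
    intro h x i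
    induction x using TensorProduct.induction_on with
    | zero => simp
    | tmul a' m =>
      simp only [Algebra.TensorProduct.congr_apply, Algebra.TensorProduct.map_tmul,
        AlgHom.coe_coe, AlgEquiv.coe_toAlgHom]
      rw [show (φ₂ 1) m = m by rw [map_one]; rfl, e_tmul, e_tmul, map_smul]
    | add u v hu hv =>
      rw [map_add, map_add, map_add, Finsupp.add_apply, Finsupp.add_apply, hu, hv, map_add]
  -- minimal support cardinality
  set S : Set ℕ := {n | ∃ x, x ∈ I ∧ x ≠ 0 ∧ (e x).support.card = n} with hS
  have hSne : S.Nonempty := by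
    obtain ⟨x₀, hx₀I, hx₀⟩ := hex
    refine ⟨(e x₀).support.card, ?_⟩
    rw [hS]
    exact ⟨x₀, hx₀I, hx₀, rfl⟩
  set n := sInf S with hn
  obtain ⟨x, hxI, hx0, hxcard⟩ : n ∈ S := Nat.sInf_mem hSne
  have hmin : ∀ z ∈ I, (e z).support.card < n → z = 0 := by
    intro z hz hlt
    by_contra h0
    have hmem : (e z).support.card ∈ S := by
      rw [hS]; exact ⟨z, hz, h0, rfl⟩
    exact absurd (Nat.sInf_le hmem) (not_le.2 hlt)
  have hA₁nt : Nontrivial A₁ := by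
    by_contra hnt
    rw [not_nontrivial_iff_subsingleton] at hnt
    apply hx0
    apply e.injective
    apply Finsupp.ext
    intro i
    exact Subsingleton.elim _ _
  obtain ⟨j₀, hj₀⟩ : (e x).support.Nonempty := by
    rw [Finsupp.support_nonempty_iff]
    intro h
    exact hx0 (by simpa using congrArg e.symm h)
  -- the ideal J of A₁
  set carJ : Set A₁ :=
    {a | ∃ y, y ∈ I ∧ (e y).support ⊆ (e x).support ∧ e y j₀ = a} with hcarJ
  have carJ_zero : (0 : A₁) ∈ carJ := ⟨0, I.zero_mem, by simp, by simp⟩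
  have carJ_add : ∀ {u v : A₁}, u ∈ carJ → v ∈ carJ → u + v ∈ carJ := by
    rintro u v ⟨y₁, hy₁, hs₁, rfl⟩ ⟨y₂, hy₂, hs₂, rfl⟩
    refine ⟨y₁ + y₂, I.add_mem hy₁ hy₂, ?_, by rw [map_add, Finsupp.add_apply]⟩
    rw [map_add]
    exact (Finsupp.support_add).trans (Finset.union_subset hs₁ hs₂)
  have carJ_neg : ∀ {u : A₁}, u ∈ carJ → -u ∈ carJ := by
    rintro u ⟨y, hy, hs, rfl⟩
    exact ⟨-y, I.neg_mem hy, by rw [map_neg, Finsupp.support_neg]; exact hs,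
      by rw [map_neg, Finsupp.neg_apply]⟩
  have carJ_mull : ∀ {u v : A₁}, v ∈ carJ → u * v ∈ carJ := by
    rintro u v ⟨y, hy, hs, rfl⟩
    refine ⟨(u ⊗ₜ[k] (1 : A₂)) * y, I.mul_mem_left _ _ hy, ?_, hL u y j₀⟩
    intro i hi
    rw [Finsupp.mem_support_iff] at hi
    apply hs
    rw [Finsupp.mem_support_iff]
    intro h0
    exact hi (by rw [hL, h0, mul_zero])
  have carJ_mulr : ∀ {u v : A₁}, u ∈ carJ → u * v ∈ carJ := by
    rintro u v ⟨y, hy, hs, rfl⟩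
    refine ⟨y * (v ⊗ₜ[k] (1 : A₂)), I.mul_mem_right _ _ hy, ?_, hR v y j₀⟩
    intro i hi
    rw [Finsupp.mem_support_iff] at hi
    apply hs
    rw [Finsupp.mem_support_iff]
    intro h0
    exact hi (by rw [hR, h0, zero_mul])
  set J : TwoSidedIdeal A₁ :=
    TwoSidedIdeal.mk' carJ carJ_zero carJ_add carJ_neg carJ_mull carJ_mulr with hJdef
  have memJ : ∀ a : A₁, a ∈ J ↔ a ∈ carJ := fun a =>
    TwoSidedIdeal.mem_mk' carJ carJ_zero carJ_add carJ_neg carJ_mull carJ_mulr a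
  have hJinv : ∀ h : H₁, ∀ a ∈ J, φ₁ h a ∈ J := by
    intro h a ha
    rw [memJ] at ha ⊢
    obtain ⟨y, hy, hs, rfl⟩ := ha
    refine ⟨(Algebra.TensorProduct.congr (φ₁ h) (φ₂ 1)) y, hI (h, 1) y hy, ?_, hH h y j₀⟩
    intro i hi
    rw [Finsupp.mem_support_iff] at hi
    apply hs
    rw [Finsupp.mem_support_iff]
    intro h0
    exact hi (by rw [hH, h0, map_zero])
  have hJtop : J = ⊤ := by
    rcases hA₁simple J hJinv with hJ | hJ
    · exfalso
      have : e x j₀ ∈ J := (memJ _).2 ⟨x, hxI, le_refl _, rfl⟩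
      rw [hJ, TwoSidedIdeal.mem_bot] at this
      exact (Finsupp.mem_support_iff.1 hj₀) this
    · exact hJ
  -- x' with coefficient 1 at j₀
  obtain ⟨x', hx'I, hx'sub, hx'j₀⟩ : (1 : A₁) ∈ carJ := by
    rw [← memJ, hJtop]; exact TwoSidedIdeal.mem_top _
  -- coefficients of x' are central
  have hcomm : ∀ (a : A₁) (i : ι), a * e x' i = e x' i * a := by
    intro a i
    set z := (a ⊗ₜ[k] (1 : A₂)) * x' - x' * (a ⊗ₜ[k] (1 : A₂)) with hz
    have hzI : z ∈ I := I.sub_mem (I.mul_mem_left _ _ hx'I) (I.mul_mem_right _ _ hx'I)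
    have hze : ∀ i, e z i = a * e x' i - e x' i * a := by
      intro i
      rw [hz, map_sub, Finsupp.sub_apply, hL, hR]
    have hzsub : (e z).support ⊆ (e x).support.erase j₀ := by
      intro i hi
      rw [Finsupp.mem_support_iff, hze] at hi
      rw [Finset.mem_erase]
      constructor
      · rintro rfl
        rw [hx'j₀, mul_one, one_mul, sub_self] at hi
        exact hi rfl
      · apply hx'sub
        rw [Finsupp.mem_support_iff]
        intro h0
        rw [h0, mul_zero, zero_mul, sub_self] at hi
        exact hi rfl
    have hz0 : z = 0 := by
      apply hmin z hzI
      calc (e z).support.card ≤ ((e x).support.erase j₀).card := Finset.card_le_card hzsub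
        _ < (e x).support.card := Finset.card_erase_lt_of_mem hj₀
        _ = n := hxcard
    have := hze i
    rw [hz0, map_zero, Finsupp.zero_apply] at this
    exact sub_eq_zero.1 this.symm
  -- coefficients of x' are H₁-fixed
  have hfix : ∀ (h : H₁) (i : ι), φ₁ h (e x' i) = e x' i := by
    intro h i
    set z := (Algebra.TensorProduct.congr (φ₁ h) (φ₂ 1)) x' - x' with hz
    have hzI : z ∈ I := I.sub_mem (hI (h, 1) x' hx'I) hx'I
    have hze : ∀ i, e z i = φ₁ h (e x' i) - e x' i := by
      intro i
      rw [hz, map_sub, Finsupp.sub_apply, hH]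
    have hzsub : (e z).support ⊆ (e x).support.erase j₀ := by
      intro i hi
      rw [Finsupp.mem_support_iff, hze] at hi
      rw [Finset.mem_erase]
      constructor
      · rintro rfl
        rw [hx'j₀, map_one, sub_self] at hi
        exact hi rfl
      · apply hx'sub
        rw [Finsupp.mem_support_iff]
        intro h0
        rw [h0, map_zero, sub_self] at hi
        exact hi rfl
    have hz0 : z = 0 := by
      apply hmin z hzI
      calc (e z).support.card ≤ ((e x).support.erase j₀).card := Finset.card_le_card hzsub
        _ < (e x).support.card := Finset.card_erase_lt_of_mem hj₀
        _ = n := hxcard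
    have := hze i
    rw [hz0, map_zero, Finsupp.zero_apply] at this
    exact sub_eq_zero.1 this.symm
  -- coefficients are scalars
  have hscal : ∀ i : ι, ∃ c : k, e x' i = algebraMap k A₁ c := by
    intro i
    exact hcenter (e x' i) (Subalgebra.mem_center_iff.2 fun a => hcomm a i)
      (fun h => hfix h i)
  choose c hc using hscal
  -- reconstruct x' as 1 ⊗ b₂
  set b₂ : A₂ := ∑ i ∈ (e x').support, c i • (b i) with hb₂
  have hrepr : ∀ i : ι, b.repr b₂ i = if i ∈ (e x').support then c i else 0 := by
    intro i
    rw [hb₂, map_sum]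
    rw [Finsupp.finset_sum_apply]
    have : ∀ j ∈ (e x').support, (b.repr (c j • b j)) i = if j = i then c j else 0 := by
      intro j _
      rw [map_smul, b.repr_self, Finsupp.smul_apply, Finsupp.single_apply]
      split <;> simp
    rw [Finset.sum_congr rfl this, Finset.sum_ite_eq' (e x').support i c]
  have hx'eq : (1 : A₁) ⊗ₜ[k] b₂ = x' := by
    apply e.injective
    apply Finsupp.ext
    intro i
    rw [e_tmul, hrepr]
    by_cases hi : i ∈ (e x').support
    · rw [if_pos hi, hc i, Algebra.algebraMap_eq_smul_one]
    · rw [if_neg hi, zero_smul]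
      exact (Finsupp.notMem_support_iff.1 hi).symm
  have hx'ne : x' ≠ 0 := by
    intro h
    have : e x' j₀ = 0 := by rw [h, map_zero]; rfl
    rw [hx'j₀] at this
    exact one_ne_zero this
  have hb₂ne : b₂ ≠ 0 := by
    intro h
    apply hx'ne
    rw [← hx'eq, h, TensorProduct.tmul_zero]
  -- the ideal J₂ of A₂
  set carJ₂ : Set A₂ := {m | (1 : A₁) ⊗ₜ[k] m ∈ I} with hcarJ₂
  have carJ₂_zero : (0 : A₂) ∈ carJ₂ := by
    show (1 : A₁) ⊗ₜ[k] (0 : A₂) ∈ I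
    rw [TensorProduct.tmul_zero]; exact I.zero_mem
  have carJ₂_add : ∀ {u v : A₂}, u ∈ carJ₂ → v ∈ carJ₂ → u + v ∈ carJ₂ := by
    intro u v hu hv
    show (1 : A₁) ⊗ₜ[k] (u + v) ∈ I
    rw [TensorProduct.tmul_add]; exact I.add_mem hu hv
  have carJ₂_neg : ∀ {u : A₂}, u ∈ carJ₂ → -u ∈ carJ₂ := by
    intro u hu
    show (1 : A₁) ⊗ₜ[k] (-u) ∈ I
    rw [TensorProduct.tmul_neg]; exact I.neg_mem hu
  have carJ₂_mull : ∀ {u v : A₂}, v ∈ carJ₂ → u * v ∈ carJ₂ := by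
    intro u v hv
    show (1 : A₁) ⊗ₜ[k] (u * v) ∈ I
    have : (1 : A₁) ⊗ₜ[k] (u * v) = ((1 : A₁) ⊗ₜ[k] u) * ((1 : A₁) ⊗ₜ[k] v) := by
      rw [Algebra.TensorProduct.tmul_mul_tmul, one_mul]
    rw [this]; exact I.mul_mem_left _ _ hv
  have carJ₂_mulr : ∀ {u v : A₂}, u ∈ carJ₂ → u * v ∈ carJ₂ := by
    intro u v hu
    show (1 : A₁) ⊗ₜ[k] (u * v) ∈ I
    have : (1 : A₁) ⊗ₜ[k] (u * v) = ((1 : A₁) ⊗ₜ[k] u) * ((1 : A₁) ⊗ₜ[k] v) := by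
      rw [Algebra.TensorProduct.tmul_mul_tmul, one_mul]
    rw [this]; exact I.mul_mem_right _ _ hu
  set J₂ : TwoSidedIdeal A₂ :=
    TwoSidedIdeal.mk' carJ₂ carJ₂_zero carJ₂_add carJ₂_neg carJ₂_mull carJ₂_mulr with hJ₂def
  have memJ₂ : ∀ m : A₂, m ∈ J₂ ↔ m ∈ carJ₂ := fun m =>
    TwoSidedIdeal.mem_mk' carJ₂ carJ₂_zero carJ₂_add carJ₂_neg carJ₂_mull carJ₂_mulr m
  have hJ₂inv : ∀ h : H₂, ∀ m ∈ J₂, φ₂ h m ∈ J₂ := by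
    intro h m hm
    rw [memJ₂] at hm ⊢
    show (1 : A₁) ⊗ₜ[k] (φ₂ h m) ∈ I
    have : (1 : A₁) ⊗ₜ[k] (φ₂ h m) =
        (Algebra.TensorProduct.congr (φ₁ 1) (φ₂ h)) ((1 : A₁) ⊗ₜ[k] m) := by
      rw [Algebra.TensorProduct.congr_apply, Algebra.TensorProduct.map_tmul, map_one,
        AlgEquiv.coe_toAlgHom]
    rw [this]
    exact hI (1, h) _ hm
  have hJ₂top : J₂ = ⊤ := by
    rcases hA₂simple J₂ hJ₂inv with hJ | hJ
    · exfalso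
      have : b₂ ∈ J₂ := (memJ₂ _).2 (by rw [hcarJ₂]; exact Set.mem_setOf.2 (hx'eq ▸ hx'I))
      rw [hJ, TwoSidedIdeal.mem_bot] at this
      exact hb₂ne this
    · exact hJ
  -- conclude
  have h1 : (1 : A₁ ⊗[k] A₂) ∈ I := by
    have : (1 : A₂) ∈ J₂ := by rw [hJ₂top]; exact TwoSidedIdeal.mem_top _
    rw [memJ₂] at this
    have h11 : (1 : A₁ ⊗[k] A₂) = (1 : A₁) ⊗ₜ[k] (1 : A₂) := Algebra.TensorProduct.one_def
    rw [h11]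
    exact this
  exact I.one_mem_iff.1 h1
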